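/- Let A ⊂ ℝ^d be a rational affine subspace (an affine subspace defined by finitely many linear equations with rational coefficients) containing some point x ∈ ℕ^d. Then there exists a constant c > 0 such that for every p* ∈ ℕ_+ and every y ∈ ℤ^d with y ≡ x (mod p*) componentwise and y ∉ A, the Euclidean distance from y to A satisfies dist(y, A) ≥ c·p*. -/

import Mathlib

/-- View an integer vector as a point of Euclidean space. -/
def intToE {d : ℕ} (y : Fin d → ℤ) : EuclideanSpace ℝ (Fin d) :=
  WithLp.toLp 2 (fun i => (y i : ℝ))

/-- View a natural-number vector as a point of Euclidean space. -/
def natToE {d : ℕ} (x : Fin d → ℕ) : EuclideanSpace ℝ (Fin d) :=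
  WithLp.toLp 2 (fun i => (x i : ℝ))

/-- **Distance of congruent lattice points to a rational affine subspace.**
Let `A ⊆ ℝ^d` be an affine subspace defined by finitely many linear equations with
rational coefficients, containing a point `x ∈ ℕ^d`.  Then there is `c > 0` such
that for every period `p* > 0`, every `y ∈ ℤ^d` with `y ≡ x (mod p*)` componentwise
and `y ∉ A` has Euclidean distance at least `c·p*` from `A`. -/
theorem dist_congruent_lattice_point_to_rational_affine_subspace
    {d l : ℕ} (M : Fin l → Fin d → ℚ) (b : Fin l → ℚ)
    (A : Set (EuclideanSpace ℝ (Fin d)))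
    (hA : A = {y | ∀ k, ∑ i, (M k i : ℝ) * y i = (b k : ℝ)})
    (x : Fin d → ℕ) (hx : natToE x ∈ A) :
    ∃ c : ℝ, 0 < c ∧
      ∀ p : ℕ, 0 < p → ∀ y : Fin d → ℤ,
        (∀ i, y i ≡ (x i : ℤ) [ZMOD (p : ℤ)]) →
        intToE y ∉ A →
        c * p ≤ Metric.infDist (intToE y) A := by
  classical
  set D : ℕ := ∏ k, ∏ i, (M k i).den with hD
  have hDpos : 0 < D :=
    Finset.prod_pos fun k _ => Finset.prod_pos fun i _ => (M k i).pos
  -- integrality of D * M k i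
  have hint : ∀ k i, ∃ n : ℤ, (D : ℚ) * M k i = n := by
    intro k i
    have h1 : (M k i).den ∣ D :=
      dvd_trans (Finset.dvd_prod_of_mem (fun i => (M k i).den) (Finset.mem_univ i))
        (Finset.dvd_prod_of_mem (fun k => ∏ i, (M k i).den) (Finset.mem_univ k))
    obtain ⟨e, he⟩ := h1
    refine ⟨(M k i).num * e, ?_⟩
    have h2 : M k i * (M k i).den = (M k i).num := Rat.mul_den_eq_num (M k i)
    have : ((D : ℕ) : ℚ) = ((M k i).den : ℚ) * e := by exact_mod_cast he
    push_cast
    rw [this]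
    linear_combination (e : ℚ) * h2
  set m : Fin l → EuclideanSpace ℝ (Fin d) := fun k => WithLp.toLp 2 (fun i => (M k i : ℝ)) with hm
  set B : ℝ := 1 + ∑ k, ‖m k‖ with hB
  have hBpos : 0 < B := by
    have : (0 : ℝ) ≤ ∑ k, ‖m k‖ := Finset.sum_nonneg fun k _ => norm_nonneg _
    linarith
  refine ⟨1 / (D * B), by positivity, ?_⟩
  intro p hp y hy hyA
  -- find the violated equation
  have hyA' : ∃ k, ∑ i, (M k i : ℝ) * (y i : ℝ) ≠ (b k : ℝ) := by
    by_contra h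
    push_neg at h
    exact hyA (by rw [hA]; intro k; simpa [intToE] using h k)
  obtain ⟨k, hk⟩ := hyA'
  -- congruence: y i = x i - p * z i
  have hz : ∀ i, ∃ z : ℤ, (x i : ℤ) - y i = p * z := by
    intro i
    exact (Int.ModEq.dvd (hy i))
  choose z hz using hz
  -- rational equation for x
  have hxq : ∑ i, M k i * (x i : ℚ) = b k := by
    have hx' : ∑ i, (M k i : ℝ) * (natToE x i) = (b k : ℝ) := by
      rw [hA] at hx; exact hx k
    have : ((∑ i, M k i * (x i : ℚ) : ℚ) : ℝ) = ((b k : ℚ) : ℝ) := by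
      push_cast
      simpa [natToE] using hx'
    exact_mod_cast this
  set r : ℚ := ∑ i, M k i * (z i : ℚ) with hr
  set s : ℚ := ∑ i, M k i * (y i : ℚ) - b k with hs
  have hsr : s = -(p : ℚ) * r := by
    have hyi : ∀ i, (y i : ℚ) = (x i : ℚ) - p * z i := by
      intro i
      have := hz i
      have : ((x i : ℤ) : ℚ) - ((y i : ℤ) : ℚ) = (p : ℚ) * (z i : ℚ) := by
        exact_mod_cast congrArg (fun t : ℤ => (t : ℚ)) this
      push_cast at this ⊢
      linarith
    rw [hs, hr]
    rw [Finset.sum_congr rfl fun i _ => by rw [hyi i]]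
    rw [← hxq]
    rw [Finset.mul_sum]
    rw [← Finset.sum_sub_distrib]
    exact Finset.sum_congr rfl fun i _ => by ring
  -- s as real value
  have hsreal : ((s : ℚ) : ℝ) = ∑ i, (M k i : ℝ) * (y i : ℝ) - (b k : ℝ) := by
    rw [hs]; push_cast; ring
  have hsne : s ≠ 0 := by
    intro h
    rw [h] at hsreal
    simp at hsreal
    exact hk (by linarith)
  have hrne : r ≠ 0 := by
    intro h
    rw [h, mul_zero] at hsr
    exact hsne hsr
  -- |r| ≥ 1/D
  obtain ⟨n, hn⟩ : ∃ n : Fin d → ℤ, ∀ i, (D : ℚ) * M k i = n i := by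
    choose n hn using fun i => hint k i
    exact ⟨n, hn⟩
  have hDr : (D : ℚ) * r = ((∑ i, n i * z i : ℤ) : ℚ) := by
    rw [hr, Finset.mul_sum]
    push_cast
    refine Finset.sum_congr rfl fun i _ => by rw [← mul_assoc, hn i]
  have hintne : (∑ i, n i * z i : ℤ) ≠ 0 := by
    intro h
    rw [h] at hDr
    simp at hDr
    rcases hDr with h | h
    · exact absurd h (by positivity)
    · exact hrne h
  have h1le : (1 : ℚ) ≤ |(D : ℚ) * r| := by
    rw [hDr]
    rw [← Int.cast_abs]
    exact_mod_cast Int.one_le_abs hintne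
  have hrabs : (1 : ℚ) / D ≤ |r| := by
    rw [abs_mul, abs_of_nonneg (by positivity : (0:ℚ) ≤ (D:ℚ))] at h1le
    rw [div_le_iff₀ (by exact_mod_cast hDpos)]
    linarith [mul_comm (D : ℚ) |r|]
  have hsabs : (p : ℚ) / D ≤ |s| := by
    rw [hsr, abs_mul, abs_neg, abs_of_nonneg (by positivity : (0:ℚ) ≤ (p:ℚ))]
    rw [div_le_iff₀ (by exact_mod_cast hDpos)] at hrabs ⊢
    calc (p : ℚ) = p * 1 := by ring
    _ ≤ (p : ℚ) * (|r| * D) := by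
        have := hrabs
        nlinarith [hrabs, (by positivity : (0:ℚ) < (p:ℚ))]
    _ = (p : ℚ) * |r| * D := by ring
  have hsabsR : (p : ℝ) / D ≤ |((s : ℚ) : ℝ)| := by
    have h := (Rat.cast_le (K := ℝ)).mpr hsabs
    push_cast at h
    exact h
  -- conclude via Cauchy-Schwarz for each w ∈ A
  have hAne : A.Nonempty := ⟨natToE x, hx⟩
  by_contra hcon
  push_neg at hcon
  obtain ⟨w, hw, hwlt⟩ := (Metric.infDist_lt_iff hAne).mp hcon
  have hweq : ∑ i, (M k i : ℝ) * w i = (b k : ℝ) := by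
    rw [hA] at hw; exact hw k
  have hinner : (inner ℝ (m k) (intToE y - w) : ℝ) = ((s : ℚ) : ℝ) := by
    rw [PiLp.inner_apply]
    simp only [RCLike.inner_apply, conj_trivial]
    rw [hsreal, ← hweq]
    rw [← Finset.sum_sub_distrib]
    refine Finset.sum_congr rfl fun i _ => by
      simp [hm, intToE]
      ring
  have hCS : |((s : ℚ) : ℝ)| ≤ ‖m k‖ * dist (intToE y) w := by
    rw [← hinner, dist_eq_norm]
    exact abs_real_inner_le_norm _ _
  have hmk : ‖m k‖ ≤ B := by
    rw [hB]
    have : ‖m k‖ ≤ ∑ j, ‖m j‖ :=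
      Finset.single_le_sum (fun j _ => norm_nonneg (m j)) (Finset.mem_univ k)
    linarith
  have hdist0 : 0 ≤ dist (intToE y) w := dist_nonneg
  have : (p : ℝ) / D ≤ B * dist (intToE y) w := by
    calc (p : ℝ) / D ≤ |((s : ℚ) : ℝ)| := hsabsR
    _ ≤ ‖m k‖ * dist (intToE y) w := hCS
    _ ≤ B * dist (intToE y) w := mul_le_mul_of_nonneg_right hmk hdist0
  have hlt : dist (intToE y) w < 1 / (D * B) * p := hwlt
  have hDR : (0:ℝ) < D := by exact_mod_cast hDpos
  have hpR : (0:ℝ) < p := by exact_mod_cast hp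
  rw [div_le_iff₀ hDR] at this
  have hDB : (0:ℝ) < (D:ℝ) * B := mul_pos hDR hBpos
  rw [one_div, inv_mul_eq_div, lt_div_iff₀ hDB] at hlt
  nlinarith
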